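/- Consider g_t(z,w) = (z² − 2, w² + t(z+1)(2−z)). There exists t₀ > 0 such that for all real t ≥ t₀ there exists δ > 0 such that for every z ∈ [−2,2] with z ∉ {−1, 2}, and every w ∈ ℂ with |Im w| ≤ δ and |Re w| ≤ 1/3, the forward orbit {g_tⁿ(z,w) : n ∈ ℕ} is an unbounded subset of ℂ². -/

import Mathlib

set_option maxHeartbeats 4000000
open Set


private lemma ball_dichotomy {x : ℝ} (hx : x ∈ Icc (-2:ℝ) 2) (h : |(x+1)*(2-x)| < 3/20) :
    |x+1| < 1/10 ∨ 2 - x < 1/10 := by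
  obtain ⟨hl, hr⟩ := hx
  by_contra hc
  push_neg at hc
  obtain ⟨h1, h2⟩ := hc
  apply absurd h; push_neg
  rcases le_or_gt 0 (x+1) with hp | hn
  · rw [abs_of_nonneg hp] at h1
    rw [abs_of_nonneg (by nlinarith : (0:ℝ) ≤ (x+1)*(2-x))]
    nlinarith [mul_nonneg (by linarith : (0:ℝ) ≤ x+1-1/10) (by linarith : (0:ℝ) ≤ 29/10-(x+1))]
  · rw [abs_of_neg hn] at h1
    rw [abs_of_nonpos (by nlinarith : (x+1)*(2-x) ≤ 0)]
    nlinarith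

private lemma qgrowth {x : ℝ} (hx : x ∈ Icc (-2:ℝ) 2) (h : |(x+1)*(2-x)| < 3/20) :
    (3/2) * |(x+1)*(2-x)| ≤ |((x^2-2)+1)*(2-(x^2-2))| := by
  obtain ⟨hl, hr⟩ := hx
  have key : ((x^2-2)+1)*(2-(x^2-2)) = ((x+1)*(2-x)) * ((x-1)*(x+2)) := by ring
  rw [key, abs_mul ((x+1)*(2-x))]
  have hfac : (3:ℝ)/2 ≤ |(x-1)*(x+2)| := by
    rcases ball_dichotomy ⟨hl, hr⟩ h with hb | hb
    · rw [abs_lt] at hb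
      rw [abs_of_nonpos (by nlinarith : (x-1)*(x+2) ≤ 0)]
      nlinarith
    · rw [abs_of_nonneg (by nlinarith : (0:ℝ) ≤ (x-1)*(x+2))]
      nlinarith
  nlinarith [abs_nonneg ((x+1)*(2-x)),
    mul_le_mul_of_nonneg_left hfac (abs_nonneg ((x+1)*(2-x)))]

private lemma neg_exit {x : ℝ} (hx : x ∈ Icc (-2:ℝ) 2) (hsmall : |(x+1)*(2-x)| < 3/20)
    (hneg : ((x^2-2)+1)*(2-(x^2-2)) ≤ -(3/20)) :
    1/5 ≤ (((x^2-2)^2-2)+1)*(2-((x^2-2)^2-2)) := by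
  obtain ⟨hl, hr⟩ := hx
  rcases ball_dichotomy ⟨hl, hr⟩ hsmall with hb | hb
  · rw [abs_lt] at hb
    obtain ⟨hb1, hb2⟩ := hb
    set u : ℝ := x^2 - 1 with hu
    have hu1 : -(19/100) < u := by nlinarith
    have hu2 : u < 21/100 := by nlinarith
    have hq : ((x^2-2)+1)*(2-(x^2-2)) = u * (3 - u) := by rw [hu]; ring
    rw [hq] at hneg
    have hule : u ≤ -(1/22) := by nlinarith
    have key : (((x^2-2)^2-2)+1)*(2-((x^2-2)^2-2)) = (u*(3-u)) * ((u-2)*(u+1)) := by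
      rw [hu]; ring
    rw [key]
    have hbb : (u-2)*(u+1) ≤ -(17/10) := by nlinarith
    have ha' : 3/20 ≤ -(u*(3-u)) := by linarith
    have hb' : 17/10 ≤ -((u-2)*(u+1)) := by linarith
    nlinarith [mul_le_mul ha' hb' (by norm_num : (0:ℝ) ≤ 17/10) (by linarith : (0:ℝ) ≤ -(u*(3-u)))]
  · exfalso
    have h1 : (161:ℝ)/100 ≤ x^2 - 2 := by nlinarith
    have h2 : x^2 - 2 ≤ 2 := by nlinarith
    nlinarith

private def Zs (z : ℝ) : ℕ → ℝ
  | 0 => z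
  | n+1 => (Zs z n)^2 - 2

private noncomputable def Ws (t z : ℝ) (w : ℂ) : ℕ → ℂ
  | 0 => w
  | n+1 => (Ws t z w n)^2 + ((t * ((Zs z n + 1) * (2 - Zs z n)) : ℝ) : ℂ)

private lemma orbit_eq (t z : ℝ) (w : ℂ) (n : ℕ) :
    (fun q : ℂ × ℂ =>
      (q.1 ^ 2 - 2, q.2 ^ 2 + (t : ℂ) * (q.1 + 1) * (2 - q.1)))^[n] ((z : ℂ), w)
    = ((Zs z n : ℂ), Ws t z w n) := by
  induction n with
  | zero => rfl
  | succ n ih =>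
    rw [Function.iterate_succ_apply', ih]
    refine Prod.ext ?_ ?_
    · show ((Zs z n : ℂ))^2 - 2 = ((Zs z (n+1) : ℝ) : ℂ)
      show _ = (((Zs z n)^2 - 2 : ℝ) : ℂ)
      push_cast; ring
    · show (Ws t z w n)^2 + (t : ℂ) * ((Zs z n : ℂ) + 1) * (2 - (Zs z n : ℂ)) = Ws t z w (n+1)
      show _ = (Ws t z w n)^2 + ((t * ((Zs z n + 1) * (2 - Zs z n)) : ℝ) : ℂ)
      push_cast; ring

private lemma Zs_mem (z : ℝ) (hz : z ∈ Icc (-2:ℝ) 2) (n : ℕ) : Zs z n ∈ Icc (-2:ℝ) 2 := by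
  induction n with
  | zero => exact hz
  | succ n ih =>
    obtain ⟨h1, h2⟩ := ih
    constructor
    · show (-2:ℝ) ≤ (Zs z n)^2 - 2; nlinarith
    · show (Zs z n)^2 - 2 ≤ 2; nlinarith

private lemma Ws_re (t z : ℝ) (w : ℂ) (n : ℕ) :
    (Ws t z w (n+1)).re = (Ws t z w n).re^2 - (Ws t z w n).im^2
      + t * ((Zs z n + 1) * (2 - Zs z n)) := by
  show ((Ws t z w n)^2 + _).re = _
  simp [pow_two, Complex.mul_re, Complex.add_re]
  try ring

private lemma Ws_im (t z : ℝ) (w : ℂ) (n : ℕ) :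
    (Ws t z w (n+1)).im = 2 * (Ws t z w n).re * (Ws t z w n).im := by
  show ((Ws t z w n)^2 + _).im = _
  simp [pow_two, Complex.mul_im, Complex.add_im]
  try ring

private lemma norm_lower (a : ℂ) (c : ℝ) : |c| - ‖a‖^2 ≤ ‖a^2 + (c:ℂ)‖ := by
  have h : ‖(c:ℂ)‖ ≤ ‖a^2 + (c:ℂ)‖ + ‖a^2‖ := by
    calc ‖(c:ℂ)‖ = ‖(a^2 + (c:ℂ)) - a^2‖ := by rw [add_sub_cancel_left]
    _ ≤ ‖a^2 + (c:ℂ)‖ + ‖a^2‖ := norm_sub_le _ _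
  rw [Complex.norm_real, Real.norm_eq_abs, norm_pow] at h
  linarith

private lemma norm_lower2 (a : ℂ) (c : ℝ) : ‖a‖^2 - |c| ≤ ‖a^2 + (c:ℂ)‖ := by
  have h : ‖a^2‖ ≤ ‖a^2 + (c:ℂ)‖ + ‖(c:ℂ)‖ := by
    calc ‖a^2‖ = ‖(a^2 + (c:ℂ)) - (c:ℂ)‖ := by rw [add_sub_cancel_right]
    _ ≤ ‖a^2 + (c:ℂ)‖ + ‖(c:ℂ)‖ := norm_sub_le _ _
  rw [Complex.norm_real, Real.norm_eq_abs, norm_pow] at h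
  linarith

private lemma norm_upper (a : ℂ) (c : ℝ) : ‖a^2 + (c:ℂ)‖ ≤ ‖a‖^2 + |c| := by
  calc ‖a^2 + (c:ℂ)‖ ≤ ‖a^2‖ + ‖(c:ℂ)‖ := norm_add_le _ _
  _ = ‖a‖^2 + |c| := by rw [Complex.norm_real, Real.norm_eq_abs, norm_pow]


/-- For `g_t(z,w) = (z² − 2, w² + t(z+1)(2−z))` with `t` large: for every
`z ∈ [−2,2] \ {−1,2}`, the strip `U_δ = {|Im w| ≤ δ, |Re w| ≤ 1/3}` is disjoint from the
fiberwise filled Julia set, i.e. all orbits starting there are unbounded. -/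
theorem strip_disjoint_from_filled_julia :
    ∃ t₀ : ℝ, 0 < t₀ ∧ ∀ t : ℝ, t₀ ≤ t → ∃ δ : ℝ, 0 < δ ∧
      ∀ z : ℝ, z ∈ Set.Icc (-2 : ℝ) 2 → z ≠ -1 → z ≠ 2 →
        ∀ w : ℂ, |w.im| ≤ δ → |w.re| ≤ 1/3 →
          ¬ Bornology.IsBounded (Set.range fun n =>
            (fun q : ℂ × ℂ =>
              (q.1 ^ 2 - 2, q.2 ^ 2 + (t : ℂ) * (q.1 + 1) * (2 - q.1)))^[n]
              ((z : ℂ), w)) := by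
  refine ⟨100000, by norm_num, fun t ht => ?_⟩
  have htpos : (0:ℝ) < t := by linarith
  set s : ℝ := Real.sqrt t with hsdef
  have hs2 : s^2 = t := Real.sq_sqrt htpos.le
  have hs0 : (0:ℝ) ≤ s := Real.sqrt_nonneg t
  have hs300 : (300:ℝ) ≤ s := by nlinarith
  set B : ℝ := 16*s + 5 with hBdef
  have hB5 : (5:ℝ) ≤ B := by nlinarith
  have h2B : (15:ℝ) ≤ 2*B := by nlinarith
  have hBpos : (0:ℝ) < B := by linarith
  obtain ⟨L, hL⟩ : ∃ L : ℕ, L = 2*⌈t⌉₊ + 4 := ⟨_, rfl⟩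
  refine ⟨(2*B)⁻¹ ^ L, pow_pos (inv_pos.2 (by linarith)) L, ?_⟩
  intro z hz hz1 hz2 w him0 hre
  obtain ⟨δ, hδ0, hδ15, hδprod, him⟩ : ∃ δ : ℝ, 0 ≤ δ ∧ δ ≤ 1/15 ∧ δ * (2*B)^L = 1 ∧
      |w.im| ≤ δ := by
    refine ⟨(2*B)⁻¹ ^ L, pow_nonneg (inv_nonneg.2 (by linarith)) L, ?_, ?_, him0⟩
    · have h1 : (2*B)⁻¹ ≤ 1/15 := by
        rw [inv_le_comm₀ (by linarith) (by norm_num)]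
        linarith
      calc (2*B)⁻¹^L ≤ (2*B)⁻¹^1 := by
            apply pow_le_pow_of_le_one (inv_nonneg.2 (by linarith)) _ (by omega)
            rw [inv_le_one_iff₀]; right; linarith
      _ = (2*B)⁻¹ := pow_one _
      _ ≤ 1/15 := h1
    · rw [← mul_pow, inv_mul_cancel₀ (by linarith : (2*B:ℝ) ≠ 0), one_pow]
  clear him0
  -- abbreviations
  have hZsucc : ∀ n, Zs z (n+1) = (Zs z n)^2 - 2 := fun n => rfl
  have hWsucc : ∀ n, Ws t z w (n+1)
      = (Ws t z w n)^2 + ((t * ((Zs z n + 1) * (2 - Zs z n)) : ℝ) : ℂ) := fun n => rfl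
  have hγ4 : ∀ n, |t * ((Zs z n + 1) * (2 - Zs z n))| ≤ 4*t := by
    intro n
    obtain ⟨h1, h2⟩ := Zs_mem z hz n
    rw [abs_mul, abs_of_pos htpos]
    have h4 : |(Zs z n + 1) * (2 - Zs z n)| ≤ 4 := by
      rw [abs_le]
      constructor
      · nlinarith
      · nlinarith [sq_nonneg (Zs z n - 1/2)]
    nlinarith
  -- Step 1: reduce to reaching modulus B
  suffices hesc : ∃ m, B ≤ ‖Ws t z w m‖ by
    obtain ⟨m, hm⟩ := hesc
    intro hbdd
    obtain ⟨C, hC⟩ := isBounded_iff_forall_norm_le.1 hbdd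
    have grow : ∀ k, 2^k * B ≤ ‖Ws t z w (m+k)‖ := by
      intro k
      induction k with
      | zero => simpa using hm
      | succ k ih =>
        have h2k : (1:ℝ) ≤ 2^k := one_le_pow₀ (by norm_num)
        have hxB : B ≤ ‖Ws t z w (m+k)‖ := le_trans (by nlinarith) ih
        have hlow : ‖Ws t z w (m+k)‖^2 - |t * ((Zs z (m+k) + 1) * (2 - Zs z (m+k)))|
            ≤ ‖Ws t z w (m+k+1)‖ := by
          rw [hWsucc (m+k)]; exact norm_lower2 _ _
        have hBB : 252*t ≤ (B-2)*B := by nlinarith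
        have hmul : (B-2)*B ≤ (B-2)*‖Ws t z w (m+k)‖ :=
          mul_le_mul_of_nonneg_left hxB (by linarith)
        have hsq : B*‖Ws t z w (m+k)‖ ≤ ‖Ws t z w (m+k)‖^2 := by
          nlinarith [norm_nonneg (Ws t z w (m+k))]
        have : 2^(k+1) * B ≤ 2*‖Ws t z w (m+k)‖ := by
          rw [pow_succ]; nlinarith
        have hfin : 2*‖Ws t z w (m+k)‖ ≤ ‖Ws t z w (m+k+1)‖ := by
          have := hγ4 (m+k); nlinarith
        have heq : m + (k+1) = (m+k)+1 := rfl
        rw [heq]; linarith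
    obtain ⟨kk, hkk⟩ := pow_unbounded_of_one_lt (C/B) (by norm_num : (1:ℝ) < 2)
    have hC2 : C < 2^kk * B := by
      rw [div_lt_iff₀ hBpos] at hkk; linarith
    have hmem := hC _ (Set.mem_range_self (m+kk))
    rw [orbit_eq] at hmem
    have hsnd : ‖Ws t z w (m+kk)‖ ≤ C := by
      have := norm_snd_le (((Zs z (m+kk) : ℝ) : ℂ), Ws t z w (m+kk))
      exact le_trans this hmem
    linarith [grow kk]
  -- Step 2: by contradiction, suppose the orbit never reaches modulus B
  by_contra hno
  push_neg at hno
  -- q never vanishes along the orbit while small, so some |q| ≥ 3/20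
  have hq0 : 0 < |(z+1)*(2-z)| := by
    rw [abs_pos]
    apply mul_ne_zero
    · intro h; exact hz1 (by linarith)
    · intro h; exact hz2 (by linarith)
  have exM : ∃ n, 3/20 ≤ |(Zs z n + 1)*(2 - Zs z n)| := by
    by_contra hh
    push_neg at hh
    have hg : ∀ n, (3/2)^n * |(z+1)*(2-z)| ≤ |(Zs z n + 1)*(2 - Zs z n)| := by
      intro n
      induction n with
      | zero => show (3/2:ℝ)^0 * _ ≤ _ ; rw [pow_zero, one_mul]; exact le_refl _
      | succ n ih =>
        have hg2 := qgrowth (Zs_mem z hz n) (hh n)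
        rw [hZsucc n]
        calc (3/2:ℝ)^(n+1) * |(z+1)*(2-z)| = (3/2) * ((3/2)^n * |(z+1)*(2-z)|) := by ring
        _ ≤ (3/2) * |(Zs z n + 1)*(2 - Zs z n)| := by linarith
        _ ≤ _ := hg2
    obtain ⟨n, hn⟩ := pow_unbounded_of_one_lt ((3/20) / |(z+1)*(2-z)|) (by norm_num : (1:ℝ) < 3/2)
    rw [div_lt_iff₀ hq0] at hn
    have := hg n
    have := hh n
    nlinarith
  obtain ⟨M, hM, hMmin⟩ : ∃ M, 3/20 ≤ |(Zs z M + 1)*(2 - Zs z M)| ∧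
      ∀ n, n < M → |(Zs z n + 1)*(2 - Zs z n)| < 3/20 :=
    ⟨Nat.find exM, Nat.find_spec exM, fun n hn => lt_of_not_ge (Nat.find_min exM hn)⟩
  -- while the kicks are small, w stays small
  have smallW : ∀ n, (∀ k, k < n → t * |(Zs z k + 1)*(2 - Zs z k)| ≤ 1/5) →
      ‖Ws t z w n‖ ≤ 1/2 ∧ |(Ws t z w n).im| ≤ δ := by
    intro n
    induction n with
    | zero =>
      intro _
      constructor
      · show ‖w‖ ≤ 1/2
        have := Complex.norm_le_abs_re_add_abs_im w
        linarith
      · exact him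
    | succ n ih =>
      intro hsmall
      obtain ⟨ih1, ih2⟩ := ih (fun k hk => hsmall k (Nat.lt_succ_of_lt hk))
      have hg := hsmall n (Nat.lt_succ_self n)
      constructor
      · rw [hWsucc n]
        have h1 := norm_upper (Ws t z w n) (t * ((Zs z n + 1) * (2 - Zs z n)))
        have h2 : |t * ((Zs z n + 1) * (2 - Zs z n))| ≤ 1/5 := by
          rw [abs_mul, abs_of_pos htpos]; exact hg
        nlinarith [norm_nonneg (Ws t z w n)]
      · rw [Ws_im]
        have hre1 : |(Ws t z w n).re| ≤ ‖Ws t z w n‖ := by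
          exact Complex.abs_re_le_norm _
        rw [abs_mul, abs_mul, abs_two]
        nlinarith [abs_nonneg (Ws t z w n).im, abs_nonneg (Ws t z w n).re]
  by_cases hcase : ∀ n, n < M → t * |(Zs z n + 1)*(2 - Zs z n)| ≤ 1/5
  · -- Case 1 : w still ≤ 1/2 at time M, huge kick
    obtain ⟨hWM, _⟩ := smallW M hcase
    have hlow : |t * ((Zs z M + 1) * (2 - Zs z M))| - ‖Ws t z w M‖^2
        ≤ ‖Ws t z w (M+1)‖ := by
      rw [hWsucc M]; exact norm_lower _ _
    have hγM : (3/20)*t ≤ |t * ((Zs z M + 1) * (2 - Zs z M))| := by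
      rw [abs_mul, abs_of_pos htpos]; nlinarith
    have hBle : B ≤ ‖Ws t z w (M+1)‖ := by
      nlinarith [norm_nonneg (Ws t z w M)]
    exact absurd hBle (not_le.2 (hno (M+1)))
  · -- Case 2
    push_neg at hcase
    obtain ⟨n', hn'M, hn'⟩ := hcase
    have exQ : ∃ n, 1/5 < t * |(Zs z n + 1)*(2 - Zs z n)| := ⟨n', hn'⟩
    obtain ⟨n₁, hn₁, hn₁M, hn₁min⟩ : ∃ n₁, 1/5 < t * |(Zs z n₁ + 1)*(2 - Zs z n₁)| ∧
        n₁ < M ∧ ∀ k, k < n₁ → t * |(Zs z k + 1)*(2 - Zs z k)| ≤ 1/5 :=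
      ⟨Nat.find exQ, Nat.find_spec exQ, lt_of_le_of_lt (Nat.find_min' exQ hn') hn'M,
        fun k hk => le_of_not_gt (Nat.find_min exQ hk)⟩
    obtain ⟨hWn₁, hImn₁⟩ := smallW n₁ hn₁min
    -- multiplicative growth chain
    have hchain : ∀ k, n₁ + k ≤ M → (3/2)^k ≤ |(Zs z (n₁+k) + 1)*(2 - Zs z (n₁+k))| * (5*t) := by
      intro k
      induction k with
      | zero =>
        intro _
        rw [pow_zero]
        show (1:ℝ) ≤ |(Zs z (n₁+0) + 1)*(2 - Zs z (n₁+0))| * (5*t)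
        rw [Nat.add_zero]
        nlinarith
      | succ k ih =>
        intro hk
        have h1 := ih (by omega)
        have h2 := qgrowth (Zs_mem z hz (n₁+k)) (hMmin _ (by omega))
        have heq : n₁ + (k+1) = (n₁+k) + 1 := rfl
        rw [heq, hZsucc (n₁+k)]
        calc (3/2:ℝ)^(k+1) = (3/2) * (3/2)^k := by ring
        _ ≤ (3/2) * (|(Zs z (n₁+k) + 1)*(2 - Zs z (n₁+k))| * (5*t)) := by linarith
        _ = ((3/2) * |(Zs z (n₁+k) + 1)*(2 - Zs z (n₁+k))|) * (5*t) := by ring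
        _ ≤ _ := by nlinarith [h2]
    -- step count bound
    obtain ⟨k, hkeq⟩ : ∃ k, M - 1 = n₁ + k := ⟨M - 1 - n₁, by omega⟩
    have hMk : M = n₁ + k + 1 := by omega
    have hcount : k + 3 ≤ L := by
      have h1 := hchain k (by omega)
      have h2 : |(Zs z (n₁+k) + 1)*(2 - Zs z (n₁+k))| < 3/20 := hMmin _ (by omega)
      have h3 : (3/2:ℝ)^k < t := by nlinarith
      have h4 : t < (3/2:ℝ)^(2*⌈t⌉₊) := by
        have hb := one_add_mul_le_pow (by norm_num : (-2:ℝ) ≤ 1/2) (2*⌈t⌉₊)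
        have hceil := Nat.le_ceil t
        have : (1:ℝ) + (2*⌈t⌉₊ : ℕ) * (1/2) = 1 + (⌈t⌉₊ : ℝ) := by push_cast; ring
        rw [this] at hb
        have : ((1:ℝ) + 1/2) = 3/2 := by norm_num
        rw [this] at hb
        linarith
      have h5 : (3/2:ℝ)^k < (3/2)^(2*⌈t⌉₊) := lt_trans h3 h4
      have h6 : k < 2*⌈t⌉₊ := by
        exact (pow_lt_pow_iff_right₀ (by norm_num : (1:ℝ) < 3/2)).1 h5
      omega
    -- imaginary part control
    have hImrec : ∀ j, |(Ws t z w (n₁+j)).im| ≤ δ * (2*B)^j := by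
      intro j
      induction j with
      | zero => simpa using hImn₁
      | succ j ih =>
        have heq : n₁ + (j+1) = (n₁+j) + 1 := rfl
        rw [heq, Ws_im]
        have hre1 : |(Ws t z w (n₁+j)).re| ≤ ‖Ws t z w (n₁+j)‖ := by
          exact Complex.abs_re_le_norm _
        have hb := hno (n₁+j)
        rw [abs_mul, abs_mul, abs_two]
        have hpB : (0:ℝ) ≤ (2*B)^j := by positivity
        calc 2 * |(Ws t z w (n₁+j)).re| * |(Ws t z w (n₁+j)).im|
            ≤ 2 * B * |(Ws t z w (n₁+j)).im| := by
              nlinarith [abs_nonneg (Ws t z w (n₁+j)).im]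
        _ ≤ 2 * B * (δ * (2*B)^j) := by nlinarith
        _ = δ * (2*B)^(j+1) := by ring
    have hIm1 : ∀ j, j ≤ L → |(Ws t z w (n₁+j)).im| ≤ 1 := by
      intro j hj
      have h1 := hImrec j
      have h2 : (2*B:ℝ)^j ≤ (2*B)^L := pow_le_pow_right₀ (by linarith) hj
      have h3 : δ * (2*B)^j ≤ δ * (2*B)^L := by nlinarith
      have h4 := hδprod
      linarith [hδprod]
    have hImM : |(Ws t z w M).im| ≤ 1 := by
      have := hIm1 (k+1) (by omega)
      rw [show n₁ + (k+1) = M from by omega] at this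
      exact this
    have hImM1 : |(Ws t z w (M+1)).im| ≤ 1 := by
      have := hIm1 (k+2) (by omega)
      rw [show n₁ + (k+2) = M+1 from by omega] at this
      exact this
    -- final kick
    have habs_re : ∀ n, (Ws t z w n).re ≤ ‖Ws t z w n‖ := by
      intro n
      exact le_trans (le_abs_self _) (Complex.abs_re_le_norm _)
    rcases le_or_gt (3/20) ((Zs z M + 1)*(2 - Zs z M)) with hpos | hneg2
    · have hre1 : (3/20)*t - 1 ≤ (Ws t z w (M+1)).re := by
        rw [Ws_re]
        have h1 : (Ws t z w M).im^2 ≤ 1 := by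
          nlinarith [abs_nonneg (Ws t z w M).im, sq_abs (Ws t z w M).im]
        nlinarith [sq_nonneg (Ws t z w M).re]
      have hBle : B ≤ (Ws t z w (M+1)).re := by nlinarith
      exact absurd (lt_of_le_of_lt (le_trans hBle (habs_re (M+1))) (hno (M+1))) (lt_irrefl B)
    · have hqMneg : (Zs z M + 1)*(2 - Zs z M) ≤ -(3/20) := by
        rcases abs_cases ((Zs z M + 1)*(2 - Zs z M)) with ⟨h1, _⟩ | ⟨h1, _⟩ <;> linarith
      obtain ⟨m0, hm0⟩ : ∃ m0, M = m0 + 1 := ⟨M - 1, by omega⟩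
      have hqm0 : ((Zs z m0)^2 - 2 + 1)*(2 - ((Zs z m0)^2 - 2)) ≤ -(3/20) := by
        rw [← hZsucc m0, ← hm0]; exact hqMneg
      have hx := neg_exit (Zs_mem z hz m0) (hMmin m0 (by omega)) hqm0
      have hq5 : 1/5 ≤ (Zs z (M+1) + 1)*(2 - Zs z (M+1)) := by
        rw [hm0, hZsucc (m0+1), hZsucc m0]
        exact hx
      have hre2 : (1/5)*t - 1 ≤ (Ws t z w (M+2)).re := by
        rw [show M+2 = (M+1)+1 by omega, Ws_re t z w (M+1)]
        have h1 : (Ws t z w (M+1)).im^2 ≤ 1 := by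
          nlinarith [abs_nonneg (Ws t z w (M+1)).im, sq_abs (Ws t z w (M+1)).im]
        have hmul5 : t*(1/5) ≤ t*((Zs z (M+1) + 1)*(2 - Zs z (M+1))) :=
          mul_le_mul_of_nonneg_left hq5 htpos.le
        linarith only [h1, hmul5, sq_nonneg (Ws t z w (M+1)).re]
      have hBle : B ≤ (Ws t z w (M+2)).re := by
        have h300 : 300*s ≤ s*s := mul_le_mul_of_nonneg_right hs300 hs0
        linarith only [hre2, h300, hs2, hs300, hBdef]
      exact absurd (lt_of_le_of_lt (le_trans hBle (habs_re (M+2))) (hno (M+2))) (lt_irrefl B)
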